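/- Let f : [1,∞) → (0,1] be non-increasing with f(t) → 0 as t → ∞. Define ξ(s) = ∏_{r=1}^{s-1} (1 - f(r+1)/(2(r+1))). Then ξ is slowly varying at infinity: for every a > 0, ξ(⌊a·s⌋)/ξ(s) → 1 as s → ∞. -/

import Mathlib

lemma aux_one_sub_sum_le_prod {ι : Type*} (s : Finset ι) (x : ι → ℝ)
    (h0 : ∀ i ∈ s, 0 ≤ x i) (h1 : ∀ i ∈ s, x i ≤ 1) :
    1 - ∑ i ∈ s, x i ≤ ∏ i ∈ s, (1 - x i) := by
  induction s using Finset.cons_induction with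
  | empty => simp
  | cons a t ha ih =>
    rw [Finset.sum_cons, Finset.prod_cons]
    have h0t : ∀ i ∈ t, 0 ≤ x i := fun i hi => h0 i (Finset.mem_cons_of_mem hi)
    have h1t : ∀ i ∈ t, x i ≤ 1 := fun i hi => h1 i (Finset.mem_cons_of_mem hi)
    have ihx := ih h0t h1t
    have hxa0 : 0 ≤ x a := h0 a (Finset.mem_cons_self a t)
    have hxa1 : x a ≤ 1 := h1 a (Finset.mem_cons_self a t)
    have hS : 0 ≤ ∑ i ∈ t, x i := Finset.sum_nonneg h0t
    nlinarith [mul_le_mul_of_nonneg_left ihx (by linarith : (0:ℝ) ≤ 1 - x a)]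

theorem stmt_6 (f : ℝ → ℝ)
    (hpos : ∀ t : ℝ, 1 ≤ t → 0 < f t ∧ f t ≤ 1)
    (hmono : ∀ x y : ℝ, 1 ≤ x → x ≤ y → f y ≤ f x)
    (hlim : Filter.Tendsto f Filter.atTop (nhds 0))
    (ξ : ℕ → ℝ)
    (hξ : ∀ s, ξ s = ∏ r ∈ Finset.Icc 1 (s - 1),
      (1 - f ((r : ℝ) + 1) / (2 * ((r : ℝ) + 1)))) :
    ∀ a : ℝ, 0 < a →
      Filter.Tendsto (fun s : ℕ => ξ ⌊a * (s : ℝ)⌋₊ / ξ s)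
        Filter.atTop (nhds 1) := by
  intro a ha
  set x : ℕ → ℝ := fun r => f ((r : ℝ) + 1) / (2 * ((r : ℝ) + 1)) with hxdef
  set g : ℕ → ℝ := fun r => 1 - x r with hgdef
  have hden : ∀ r : ℕ, (0:ℝ) < 2 * ((r : ℝ) + 1) := by
    intro r; positivity
  have harg : ∀ r : ℕ, (1:ℝ) ≤ (r : ℝ) + 1 := by
    intro r; have := Nat.cast_nonneg (α := ℝ) r; linarith
  have hx0 : ∀ r : ℕ, 0 < x r := fun r =>
    div_pos (hpos _ (harg r)).1 (hden r)
  have hx1 : ∀ r : ℕ, x r ≤ 1 / 2 := by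
    intro r
    have h1 : f ((r:ℝ)+1) ≤ 1 := (hpos _ (harg r)).2
    have h2 : (2:ℝ) ≤ 2 * ((r:ℝ)+1) := by
      have := Nat.cast_nonneg (α := ℝ) r; nlinarith
    rw [div_le_iff₀ (hden r)]
    nlinarith [(hpos _ (harg r)).1]
  have hg0 : ∀ r : ℕ, (0:ℝ) < g r := by
    intro r; have := hx1 r; simp only [hgdef]; linarith
  have hg1 : ∀ r : ℕ, g r ≤ 1 := by
    intro r; have := hx0 r; simp only [hgdef]; linarith
  -- rewrite ξ as product of g over Ioc 0 (s-1)
  have hξ' : ∀ s : ℕ, ξ s = ∏ r ∈ Finset.Ioc 0 (s - 1), g r := by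
    intro s
    rw [hξ s, ← Finset.Icc_add_one_left_eq_Ioc]
    rfl
  have hξpos : ∀ s : ℕ, 0 < ξ s := by
    intro s
    rw [hξ' s]
    exact Finset.prod_pos fun r _ => hg0 r
  -- key: ratio as tail product
  have key : ∀ s m : ℕ, 1 ≤ s → s ≤ m →
      ξ m / ξ s = ∏ r ∈ Finset.Ioc (s - 1) (m - 1), g r := by
    intro s m hs hsm
    have h1 : (0:ℕ) ≤ s - 1 := Nat.zero_le _
    have h2 : s - 1 ≤ m - 1 := Nat.sub_le_sub_right hsm 1
    rw [div_eq_iff (ne_of_gt (hξpos s)), hξ' m, hξ' s, mul_comm,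
      Finset.prod_Ioc_consecutive _ h1 h2]
  -- the tail sum bound
  have sum_bound : ∀ s m : ℕ, 1 ≤ s → s ≤ m →
      ∑ r ∈ Finset.Ioc (s - 1) (m - 1), x r ≤ ((m:ℝ) - s) * x s := by
    intro s m hs hsm
    have hb : ∀ r ∈ Finset.Ioc (s - 1) (m - 1), x r ≤ x s := by
      intro r hr
      have hr1 : s - 1 < r := (Finset.mem_Ioc.mp hr).1
      have hsr : s ≤ r := Nat.le_of_pred_lt hr1
      have hsrR : (s:ℝ) ≤ (r:ℝ) := Nat.cast_le.mpr hsr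
      have hf : f ((r:ℝ)+1) ≤ f ((s:ℝ)+1) := hmono _ _ (harg s) (by linarith)
      have := (hpos _ (harg r)).1
      apply div_le_div₀ (le_of_lt (hpos _ (harg s)).1) hf (hden s)
      linarith
    calc ∑ r ∈ Finset.Ioc (s - 1) (m - 1), x r
        ≤ (Finset.Ioc (s - 1) (m - 1)).card • x s := Finset.sum_le_card_nsmul _ _ _ hb
      _ = ((m - s : ℕ) : ℝ) * x s := by
          rw [Nat.card_Ioc, tsub_tsub_tsub_cancel_right hs, nsmul_eq_mul]
      _ = ((m:ℝ) - s) * x s := by rw [Nat.cast_sub hsm]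
  -- general tail product bounds
  have prod_le_one : ∀ s m : ℕ,
      ∏ r ∈ Finset.Ioc (s - 1) (m - 1), g r ≤ 1 :=
    fun s m => Finset.prod_le_one (fun r _ => (hg0 r).le) (fun r _ => hg1 r)
  have prod_ge : ∀ s m : ℕ, 1 ≤ s → s ≤ m →
      1 - ((m:ℝ) - s) * x s ≤ ∏ r ∈ Finset.Ioc (s - 1) (m - 1), g r := by
    intro s m hs hsm
    have := aux_one_sub_sum_le_prod (Finset.Ioc (s - 1) (m - 1)) x
      (fun r _ => (hx0 r).le) (fun r _ => le_trans (hx1 r) (by norm_num))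
    have hsb := sum_bound s m hs hsm
    calc 1 - ((m:ℝ) - s) * x s ≤ 1 - ∑ r ∈ Finset.Ioc (s-1) (m-1), x r := by linarith
      _ ≤ _ := this
  rcases le_or_gt 1 a with hA | hA
  · -- a ≥ 1 : ⌊a s⌋ ≥ s
    have hsm : ∀ s : ℕ, s ≤ ⌊a * (s:ℝ)⌋₊ := by
      intro s
      exact Nat.le_floor (by nlinarith [Nat.cast_nonneg (α := ℝ) s])
    have hml : ∀ s : ℕ, (⌊a * (s:ℝ)⌋₊ : ℝ) ≤ a * s := fun s =>
      Nat.floor_le (by positivity)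
    have hL : Filter.Tendsto (fun s : ℕ => 1 - a / 2 * f ((s:ℝ)+1))
        Filter.atTop (nhds 1) := by
      have h1 : Filter.Tendsto (fun s : ℕ => f ((s:ℝ)+1)) Filter.atTop (nhds 0) :=
        hlim.comp (Filter.tendsto_atTop_add_const_right _ 1 tendsto_natCast_atTop_atTop)
      have h2 := (h1.const_mul (a/2)).const_sub 1
      simpa using h2
    apply tendsto_of_tendsto_of_tendsto_of_le_of_le' hL tendsto_const_nhds
    · filter_upwards [Filter.eventually_ge_atTop 1] with s hs
      rw [key s _ hs (hsm s)]
      refine le_trans ?_ (prod_ge s _ hs (hsm s))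
      have hu0 : 0 ≤ x s := (hx0 s).le
      have hfu : f ((s:ℝ)+1) = x s * (2 * ((s:ℝ)+1)) := by
        rw [hxdef]
        field_simp
      have hcs : (0:ℝ) ≤ (s:ℝ) := Nat.cast_nonneg s
      have h1 : ((⌊a * (s:ℝ)⌋₊:ℝ) - s) * x s ≤ a / 2 * f ((s:ℝ)+1) := by
        rw [hfu]
        nlinarith [hml s, mul_nonneg ha.le hu0, mul_nonneg (mul_nonneg ha.le hu0) hcs]
      linarith
    · filter_upwards [Filter.eventually_ge_atTop 1] with s hs
      rw [key s _ hs (hsm s)]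
      exact prod_le_one s _
  · -- a < 1 : ⌊a s⌋ ≤ s
    have hAs : Filter.Tendsto (fun s : ℕ => a * (s:ℝ)) Filter.atTop Filter.atTop :=
      (tendsto_natCast_atTop_atTop).const_mul_atTop ha
    have hev : ∀ᶠ s : ℕ in Filter.atTop, 2 ≤ a * (s:ℝ) := hAs.eventually_ge_atTop 2
    have hms : ∀ s : ℕ, ⌊a * (s:ℝ)⌋₊ ≤ s := by
      intro s
      have : a * (s:ℝ) ≤ ((s:ℕ):ℝ) := by nlinarith [Nat.cast_nonneg (α := ℝ) s]
      calc ⌊a * (s:ℝ)⌋₊ ≤ ⌊((s:ℕ):ℝ)⌋₊ := Nat.floor_le_floor this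
        _ = s := Nat.floor_natCast s
    have hmb : ∀ s : ℕ, a * (s:ℝ) < (⌊a * (s:ℝ)⌋₊ : ℝ) + 1 := fun s =>
      Nat.lt_floor_add_one _
    set P : ℕ → ℝ := fun s => ∏ r ∈ Finset.Ioc (⌊a * (s:ℝ)⌋₊ - 1) (s - 1), g r with hP
    have hfm : Filter.Tendsto (fun s : ℕ => f ((⌊a * (s:ℝ)⌋₊:ℝ) + 1))
        Filter.atTop (nhds 0) := by
      refine hlim.comp (Filter.tendsto_atTop_mono (fun s => (hmb s).le) hAs)
    have hLP : Filter.Tendsto (fun s : ℕ => 1 - f ((⌊a * (s:ℝ)⌋₊:ℝ) + 1) / a)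
        Filter.atTop (nhds 1) := by
      have h2 := (hfm.div_const a).const_sub 1
      simpa using h2
    have hPl : Filter.Tendsto P Filter.atTop (nhds 1) := by
      apply tendsto_of_tendsto_of_tendsto_of_le_of_le' hLP tendsto_const_nhds
      · filter_upwards [hev, Filter.eventually_ge_atTop 1] with s h2s hs1
        set m : ℕ := ⌊a * (s:ℝ)⌋₊ with hmdef
        have h1m : 1 ≤ m := Nat.le_floor (by push_cast; linarith)
        refine le_trans ?_ (prod_ge m s h1m (hms s))
        have hu0 : 0 ≤ x m := (hx0 m).le
        have hfu : f ((m:ℝ)+1) = x m * (2 * ((m:ℝ)+1)) := by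
          rw [hxdef]
          field_simp
        have hcs : (1:ℝ) ≤ (s:ℝ) := by exact_mod_cast hs1
        have hcm : (0:ℝ) ≤ (m:ℝ) := Nat.cast_nonneg m
        have h1 : ((s:ℝ) - m) * x m ≤ f ((m:ℝ)+1) / a := by
          rw [le_div_iff₀ ha, hfu]
          nlinarith [hmb s, mul_le_mul_of_nonneg_left (hmb s).le hu0,
            mul_nonneg (mul_nonneg hu0 ha.le) hcm,
            mul_nonneg (mul_nonneg hu0 ha.le) (by linarith : (0:ℝ) ≤ (s:ℝ))]
        linarith
      · filter_upwards with s
        exact prod_le_one _ _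
    have hPinv : Filter.Tendsto (fun s => (P s)⁻¹) Filter.atTop (nhds 1) := by
      have := hPl.inv₀ one_ne_zero
      simpa using this
    refine hPinv.congr' ?_
    filter_upwards [hev, Filter.eventually_ge_atTop 1] with s h2s hs1
    set m : ℕ := ⌊a * (s:ℝ)⌋₊ with hmdef
    have h1m : 1 ≤ m := Nat.le_floor (by push_cast; linarith)
    have hk : P s = ξ s / ξ m := (key m s h1m (hms s)).symm
    rw [hk, inv_div]
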